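/- Let u be a convex function on ℝⁿ whose subdifferential image ∂u(ℝⁿ) is bounded, with ∇u(x) ∈ Ω̄₁ ∪ Ω̄₂ for every differentiability point x, where Ω̄₁ and Ω̄₂ are compact sets strongly separated by a hyperplane Π. Then the 'tear set' Σ := {x : ∂u(x) ∩ Ω̄₁ ≠ ∅ and ∂u(x) ∩ Ω̄₂ ≠ ∅} has Hausdorff dimension at most n − 1; in fact it is contained in the graph of a Lipschitz function over Π, hence is (n−1)-rectifiable with locally finite H^{n−1} measure. -/

import Mathlib

open Set
open scoped NNReal ENNReal

noncomputable section

/-- The subdifferential of `f : ℝⁿ → ℝ` at `x`. -/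
def subdiff {n : ℕ} (f : EuclideanSpace ℝ (Fin n) → ℝ) (x : EuclideanSpace ℝ (Fin n)) :
    Set (EuclideanSpace ℝ (Fin n)) :=
  {p | ∀ y, f x + inner ℝ p (y - x) ≤ f y}

/-- Append a last coordinate `t` to `x' ∈ ℝⁿ`, giving a point of `ℝⁿ⁺¹`. -/
def snocPt {n : ℕ} (x' : EuclideanSpace ℝ (Fin n)) (t : ℝ) :
    EuclideanSpace ℝ (Fin (n + 1)) :=
  (EuclideanSpace.equiv (Fin (n + 1)) ℝ).symm (Fin.snoc (fun i => x' i) t)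

/-- Projection onto the first `n` coordinates. -/
def projPt {n : ℕ} (x : EuclideanSpace ℝ (Fin (n + 1))) : EuclideanSpace ℝ (Fin n) :=
  (EuclideanSpace.equiv (Fin n) ℝ).symm (fun i => x i.castSucc)

open MeasureTheory

namespace TearAux

variable {n : ℕ}

lemma snocPt_castSucc (x' : EuclideanSpace ℝ (Fin n)) (t : ℝ) (j : Fin n) :
    snocPt x' t j.castSucc = x' j := by
  show Fin.snoc (α := fun _ => ℝ) (fun i => x' i) t j.castSucc = x' j
  exact Fin.snoc_castSucc _ _ _

lemma snocPt_last (x' : EuclideanSpace ℝ (Fin n)) (t : ℝ) :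
    snocPt x' t (Fin.last n) = t := by
  show Fin.snoc (α := fun _ => ℝ) (fun i => x' i) t (Fin.last n) = t
  exact Fin.snoc_last _ _

lemma projPt_apply (x : EuclideanSpace ℝ (Fin (n + 1))) (i : Fin n) :
    projPt x i = x i.castSucc := rfl

lemma snocPt_projPt (x : EuclideanSpace ℝ (Fin (n + 1))) :
    snocPt (projPt x) (x (Fin.last n)) = x := by
  ext i
  induction i using Fin.lastCases with
  | last => exact snocPt_last _ _
  | cast j => rw [snocPt_castSucc]; rfl

lemma projPt_snocPt (x' : EuclideanSpace ℝ (Fin n)) (t : ℝ) :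
    projPt (snocPt x' t) = x' := by
  ext i
  rw [projPt_apply, snocPt_castSucc]

lemma norm_projPt_le (x : EuclideanSpace ℝ (Fin (n + 1))) : ‖projPt x‖ ≤ ‖x‖ := by
  rw [EuclideanSpace.norm_eq, EuclideanSpace.norm_eq]
  apply Real.sqrt_le_sqrt
  rw [Fin.sum_univ_castSucc]
  simp only [projPt_apply]
  exact le_add_of_nonneg_right (by positivity)

lemma snocPt_sub (a b : EuclideanSpace ℝ (Fin n)) (s t : ℝ) :
    snocPt a s - snocPt b t = snocPt (a - b) (s - t) := by
  ext i
  induction i using Fin.lastCases with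
  | last => simp [PiLp.sub_apply, snocPt_last]
  | cast j => simp [PiLp.sub_apply, snocPt_castSucc]

lemma snocPt_add (a b : EuclideanSpace ℝ (Fin n)) (s t : ℝ) :
    snocPt a s + snocPt b t = snocPt (a + b) (s + t) := by
  ext i
  induction i using Fin.lastCases with
  | last => simp [PiLp.add_apply, snocPt_last]
  | cast j => simp [PiLp.add_apply, snocPt_castSucc]

lemma norm_snocPt_zero (v : EuclideanSpace ℝ (Fin n)) : ‖snocPt v 0‖ = ‖v‖ := by
  rw [EuclideanSpace.norm_eq, EuclideanSpace.norm_eq, Fin.sum_univ_castSucc]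
  simp [snocPt_castSucc, snocPt_last]

lemma norm_snocPt_zero' (r : ℝ) : ‖snocPt (0 : EuclideanSpace ℝ (Fin n)) r‖ = |r| := by
  rw [EuclideanSpace.norm_eq, Fin.sum_univ_castSucc]
  simp only [snocPt_castSucc, snocPt_last]
  simp [Real.sqrt_sq_eq_abs]

lemma norm_snocPt_le (v : EuclideanSpace ℝ (Fin n)) (r : ℝ) :
    ‖snocPt v r‖ ≤ ‖v‖ + |r| := by
  have : snocPt v r = snocPt v 0 + snocPt 0 r := by
    rw [snocPt_add]; simp
  rw [this]
  refine (norm_add_le _ _).trans ?_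
  rw [norm_snocPt_zero, norm_snocPt_zero']

lemma subdiff_mono {m : ℕ} {u : EuclideanSpace ℝ (Fin m) → ℝ}
    {x y p q : EuclideanSpace ℝ (Fin m)}
    (hp : p ∈ subdiff u x) (hq : q ∈ subdiff u y) :
    (0 : ℝ) ≤ inner ℝ (p - q) (x - y) := by
  have h1 := hp y
  have h2 := hq x
  have e1 : (inner ℝ p (x - y) : ℝ) = - inner ℝ p (y - x) := by
    rw [← neg_sub, inner_neg_right]
  have e2 : (inner ℝ (p - q) (x - y) : ℝ) = inner ℝ p (x - y) - inner ℝ q (x - y) :=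
    inner_sub_left _ _ _
  rw [e2, e1]
  linarith

lemma inner_split (p q x y : EuclideanSpace ℝ (Fin (n + 1))) :
    (inner ℝ (p - q) (x - y) : ℝ) =
      (inner ℝ (projPt p - projPt q) (projPt x - projPt y) : ℝ) +
        (p (Fin.last n) - q (Fin.last n)) * (x (Fin.last n) - y (Fin.last n)) := by
  simp only [PiLp.inner_apply, RCLike.inner_apply', conj_trivial, PiLp.sub_apply,
    projPt_apply]
  rw [Fin.sum_univ_castSucc]

lemma key_onesided {u : EuclideanSpace ℝ (Fin (n + 1)) → ℝ}
    {Ω₁ Ω₂ : Set (EuclideanSpace ℝ (Fin (n + 1)))} {a d M : ℝ} (hd : 0 < d) (hM : 0 ≤ M)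
    (hM₁ : ∀ p ∈ Ω₁, ‖p‖ ≤ M) (hM₂ : ∀ p ∈ Ω₂, ‖p‖ ≤ M)
    (hsep₁ : ∀ p ∈ Ω₁, p (Fin.last n) < a - d)
    (hsep₂ : ∀ p ∈ Ω₂, a + d < p (Fin.last n))
    {x y : EuclideanSpace ℝ (Fin (n + 1))}
    (hx : (subdiff u x ∩ Ω₂).Nonempty) (hy : (subdiff u y ∩ Ω₁).Nonempty) :
    y (Fin.last n) - x (Fin.last n) ≤ (M / d) * ‖projPt x - projPt y‖ := by
  obtain ⟨p, hpu, hpΩ⟩ := hx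
  obtain ⟨q, hqu, hqΩ⟩ := hy
  have h0 : (0 : ℝ) ≤ inner ℝ (p - q) (x - y) := subdiff_mono hpu hqu
  rw [inner_split] at h0
  have hlast : 2 * d ≤ p (Fin.last n) - q (Fin.last n) := by
    have := hsep₂ p hpΩ
    have := hsep₁ q hqΩ
    linarith
  set D : ℝ := ‖projPt x - projPt y‖ with hD
  have hDnn : 0 ≤ D := norm_nonneg _
  have hS : |(inner ℝ (projPt p - projPt q) (projPt x - projPt y) : ℝ)| ≤ 2 * M * D := by
    refine (abs_real_inner_le_norm _ _).trans ?_
    have h1 : ‖projPt p - projPt q‖ ≤ 2 * M := by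
      refine (norm_sub_le _ _).trans ?_
      have := (norm_projPt_le p).trans (hM₂ p hpΩ)
      have := (norm_projPt_le q).trans (hM₁ q hqΩ)
      linarith
    exact mul_le_mul_of_nonneg_right h1 hDnn
  have hS' : (inner ℝ (projPt p - projPt q) (projPt x - projPt y) : ℝ) ≤ 2 * M * D :=
    (le_abs_self _).trans hS
  rw [div_mul_eq_mul_div, le_div_iff₀ hd]
  rcases le_or_gt (y (Fin.last n)) (x (Fin.last n)) with hδ | hδ
  · nlinarith [mul_nonneg hM hDnn]
  · have hpos : 0 ≤ y (Fin.last n) - x (Fin.last n) := by linarith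
    nlinarith [mul_le_mul_of_nonneg_right hlast hpos]

end TearAux

open TearAux in
/-- The tear set of an optimal potential whose gradient takes values in two compact sets
strongly separated by the coordinate hyperplane `{xⁿ⁺¹ = a}` is contained in a Lipschitz
graph over the hyperplane; hence it has Hausdorff dimension at most `n` (codimension one in
`ℝⁿ⁺¹`) and locally finite `n`-dimensional Hausdorff measure. -/
theorem tear_set_dimension (n : ℕ)
    (u : EuclideanSpace ℝ (Fin (n + 1)) → ℝ) (hu : ConvexOn ℝ univ u)
    (hbdd : Bornology.IsBounded (⋃ x, subdiff u x))
    (Ω₁ Ω₂ : Set (EuclideanSpace ℝ (Fin (n + 1))))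
    (hΩ₁ : IsCompact Ω₁) (hΩ₂ : IsCompact Ω₂)
    (hgrad : ∀ x, DifferentiableAt ℝ u x → gradient u x ∈ Ω₁ ∪ Ω₂)
    (a d : ℝ) (hd : 0 < d)
    (hsep₁ : ∀ p ∈ Ω₁, p (Fin.last n) < a - d)
    (hsep₂ : ∀ p ∈ Ω₂, a + d < p (Fin.last n))
    (Sig : Set (EuclideanSpace ℝ (Fin (n + 1))))
    (hSig : Sig = {x | (subdiff u x ∩ Ω₁).Nonempty ∧ (subdiff u x ∩ Ω₂).Nonempty}) :
    dimH Sig ≤ n ∧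
    (∃ (h : EuclideanSpace ℝ (Fin n) → ℝ) (C : NNReal), LipschitzWith C h ∧
      Sig ⊆ {x | x (Fin.last n) = h (projPt x)}) ∧
    ∀ R : ℝ, μH[(n : ℝ)] (Sig ∩ Metric.closedBall 0 R) < ⊤ := by
  classical
  -- a bound on Ω₁ ∪ Ω₂
  obtain ⟨r, hr⟩ := ((hΩ₁.union hΩ₂).isBounded).subset_closedBall 0
  set M : ℝ := max r 0 with hMdef
  have hM : 0 ≤ M := le_max_right _ _
  have hM₁ : ∀ p ∈ Ω₁, ‖p‖ ≤ M := fun p hp => by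
    have := hr (Or.inl hp); rw [Metric.mem_closedBall, dist_zero_right] at this
    exact this.trans (le_max_left _ _)
  have hM₂ : ∀ p ∈ Ω₂, ‖p‖ ≤ M := fun p hp => by
    have := hr (Or.inr hp); rw [Metric.mem_closedBall, dist_zero_right] at this
    exact this.trans (le_max_left _ _)
  -- the two-sided Lipschitz estimate on the tear set
  have key : ∀ x ∈ Sig, ∀ y ∈ Sig,
      |x (Fin.last n) - y (Fin.last n)| ≤ (M / d) * ‖projPt x - projPt y‖ := by
    intro x hx y hy
    rw [hSig] at hx hy
    rw [abs_sub_le_iff]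
    constructor
    · have := key_onesided (u := u) hd hM hM₁ hM₂ hsep₁ hsep₂ hy.2 hx.1
      rwa [norm_sub_rev] at this
    · exact key_onesided (u := u) hd hM hM₁ hM₂ hsep₁ hsep₂ hx.2 hy.1
  set C : ℝ≥0 := ⟨M / d, div_nonneg hM hd.le⟩ with hCdef
  set T : Set (EuclideanSpace ℝ (Fin n)) := projPt '' Sig with hT
  set f : EuclideanSpace ℝ (Fin n) → ℝ :=
    fun x' => if hx : ∃ t, snocPt x' t ∈ Sig then hx.choose else 0 with hf
  have hfmem : ∀ x' ∈ T, snocPt x' (f x') ∈ Sig := by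
    intro x' hx'
    obtain ⟨z, hz, hz'⟩ := hx'
    have hex : ∃ t, snocPt x' t ∈ Sig := ⟨z (Fin.last n), by rw [← hz', snocPt_projPt]; exact hz⟩
    simp only [hf, dif_pos hex]
    exact hex.choose_spec
  have hfl : LipschitzOnWith C f T := by
    rw [lipschitzOnWith_iff_dist_le_mul]
    intro x' hx' y' hy'
    have h1 := hfmem x' hx'
    have h2 := hfmem y' hy'
    have := key _ h1 _ h2
    rw [snocPt_last, snocPt_last, projPt_snocPt, projPt_snocPt] at this
    rw [Real.dist_eq, dist_eq_norm]
    exact this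
  obtain ⟨h, hh, hhf⟩ := hfl.extend_real
  have hgraph : Sig ⊆ {x | x (Fin.last n) = h (projPt x)} := by
    intro x hx
    have hxT : projPt x ∈ T := ⟨x, hx, rfl⟩
    have hz := hfmem _ hxT
    have := key _ hx _ hz
    rw [snocPt_last, projPt_snocPt, sub_self, norm_zero, mul_zero, abs_nonpos_iff,
      sub_eq_zero] at this
    rw [mem_setOf_eq, this, hhf hxT]
  -- the Lipschitz graph map
  set F : EuclideanSpace ℝ (Fin n) → EuclideanSpace ℝ (Fin (n + 1)) :=
    fun x' => snocPt x' (h x') with hF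
  have hFlip : LipschitzWith (1 + C) F := by
    apply LipschitzWith.of_dist_le_mul
    intro a b
    rw [dist_eq_norm]
    have : F a - F b = snocPt (a - b) (h a - h b) := snocPt_sub _ _ _ _
    rw [this]
    refine (norm_snocPt_le _ _).trans ?_
    have hhd := hh.dist_le_mul a b
    rw [Real.dist_eq, dist_eq_norm] at hhd
    rw [dist_eq_norm]
    push_cast
    nlinarith [norm_nonneg (a - b)]
  have hrange : ∀ x ∈ Sig, F (projPt x) = x := by
    intro x hx
    have := hgraph hx
    rw [mem_setOf_eq] at this
    rw [hF]
    simp only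
    rw [← this, snocPt_projPt]
  refine ⟨?_, ⟨h, C, hh, hgraph⟩, ?_⟩
  · -- Hausdorff dimension bound
    have hsub : Sig ⊆ F '' univ := fun x hx => ⟨projPt x, mem_univ _, hrange x hx⟩
    calc dimH Sig ≤ dimH (F '' univ) := dimH_mono hsub
      _ ≤ dimH (univ : Set (EuclideanSpace ℝ (Fin n))) := hFlip.dimH_image_le _
      _ = (Module.finrank ℝ (EuclideanSpace ℝ (Fin n)) : ℝ≥0∞) := Real.dimH_univ_eq_finrank _
      _ = n := by rw [finrank_euclideanSpace_fin]
  · -- local finiteness of the Hausdorff measure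
    intro R
    set e := WithLp.equiv 2 (Fin n → ℝ) with he
    have helip : LipschitzWith 1 ⇑e := PiLp.lipschitzWith_ofLp 2 _
    have hesym : LipschitzWith ((Fintype.card (Fin n) : ℝ≥0) ^ (1 / (2:ℝ≥0∞)).toReal) ⇑e.symm :=
      (PiLp.antilipschitzWith_ofLp 2 _).to_rightInverse e.apply_symm_apply
    set K : ℝ≥0 := (1 + C) * ((Fintype.card (Fin n) : ℝ≥0) ^ (1 / (2:ℝ≥0∞)).toReal) with hK
    have hG : LipschitzWith K (F ∘ ⇑e.symm) := hFlip.comp hesym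
    have hsub : Sig ∩ Metric.closedBall 0 R ⊆ (F ∘ ⇑e.symm) '' (Metric.closedBall 0 |R|) := by
      rintro x ⟨hx, hxB⟩
      refine ⟨e (projPt x), ?_, ?_⟩
      · rw [Metric.mem_closedBall] at hxB ⊢
        have he0 : e (0 : EuclideanSpace ℝ (Fin n)) = 0 := rfl
        have h1 : dist (e (projPt x)) 0 ≤ dist (projPt x) 0 := by
          have := helip.dist_le_mul (projPt x) 0
          rwa [he0, NNReal.coe_one, one_mul] at this
        have h2 : dist (projPt x) 0 ≤ dist x 0 := by
          rw [dist_zero_right, dist_zero_right]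
          exact norm_projPt_le x
        calc dist (e (projPt x)) 0 ≤ dist x 0 := h1.trans h2
          _ ≤ R := hxB
          _ ≤ |R| := le_abs_self R
      · simp only [Function.comp_apply, Equiv.symm_apply_apply]
        exact hrange x hx
    have hμpi : (μH[(n : ℝ)] : Measure (Fin n → ℝ)) = volume := by
      have := hausdorffMeasure_pi_real (ι := Fin n)
      rwa [Fintype.card_fin] at this
    calc μH[(n : ℝ)] (Sig ∩ Metric.closedBall 0 R)
        ≤ μH[(n : ℝ)] ((F ∘ ⇑e.symm) '' (Metric.closedBall 0 |R|)) := measure_mono hsub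
      _ ≤ (K : ℝ≥0∞) ^ (n : ℝ) * μH[(n : ℝ)] (Metric.closedBall (0 : Fin n → ℝ) |R|) :=
          hG.hausdorffMeasure_image_le (by positivity) _
      _ < ⊤ := by
          rw [hμpi]
          refine ENNReal.mul_lt_top ?_ ?_
          · exact ENNReal.rpow_lt_top_of_nonneg (by positivity) ENNReal.coe_ne_top
          · exact (isCompact_closedBall _ _).measure_lt_top
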